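/- arXiv:1002.3644 — 6 statements merged into one kernel-verified Lean document; each statement's English description precedes it below -/
import Mathlib

section
/- Suppose J·s ⊆ J (i.e. a·s ∈ J for every a ∈ J), the endomorphism ring Module.End A (A⧸J) of the quotient left A-module is finite-dimensional as a K-vector space, and the evaluation map K[X] → A, p ↦ p(s), is injective. Then J ∩ K[s] ≠ {0}: there exists a polynomial p ∈ K[X] such that p(s) ∈ J and p(s) ≠ 0. -/
/-- If `J·s ⊆ J`, the endomorphism ring of `A ⧸ J` is finite-dimensional
over `K`, and `p ↦ p(s)` is injective, then `J ∩ K[s] ≠ {0}`. -/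
theorem stmt0 (K : Type*) [Field K] [CharZero K]
    (A : Type*) [Ring A] [Algebra K A]
    (J : Submodule A A) (s : A)
    (hJs : ∀ a ∈ J, a * s ∈ J)
    (hfin : FiniteDimensional K (Module.End A (A ⧸ J)))
    (hinj : Function.Injective (Polynomial.aeval s : Polynomial K → A)) :
    ∃ p : Polynomial K, Polynomial.aeval s p ∈ J ∧ Polynomial.aeval s p ≠ 0 := by
  -- right multiplication by s on the quotient
  set f : A →ₗ[A] A ⧸ J := J.mkQ ∘ₗ LinearMap.toSpanSingleton A A s with hf
  have hker : J ≤ LinearMap.ker f := by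
    intro a ha
    simp only [hf, LinearMap.mem_ker, LinearMap.comp_apply,
      LinearMap.toSpanSingleton_apply, Submodule.mkQ_apply, smul_eq_mul,
      Submodule.Quotient.mk_eq_zero]
    exact hJs a ha
  set T : Module.End A (A ⧸ J) := J.liftQ f hker with hT
  have hTmk : ∀ a : A, T (Submodule.Quotient.mk a) = Submodule.Quotient.mk (a * s) := by
    intro a; rfl
  have hpow : ∀ (n : ℕ) (a : A), (T ^ n) (Submodule.Quotient.mk a)
      = Submodule.Quotient.mk (a * s ^ n) := by
    intro n
    induction n with
    | zero => intro a; simp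
    | succ n ih =>
        intro a
        rw [pow_succ, Module.End.mul_apply, hTmk, ih, pow_succ', mul_assoc]
  have key : ∀ p : Polynomial K,
      (Polynomial.aeval T p) (Submodule.Quotient.mk 1)
        = Submodule.Quotient.mk (Polynomial.aeval s p) := by
    intro p
    induction p using Polynomial.induction_on' with
    | add p q hp hq =>
        simp [map_add, hp, hq, Submodule.Quotient.mk_add]
    | monomial n c =>
        rw [Polynomial.aeval_monomial, Polynomial.aeval_monomial,
          ← Algebra.smul_def, ← Algebra.smul_def, LinearMap.smul_apply, hpow n 1, one_mul]
        exact (Submodule.mkQ J |>.restrictScalars K |>.map_smul c (s ^ n)).symm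
  have hTint : IsIntegral K T := IsIntegral.of_finite K T
  set p := minpoly K T with hp
  have hp0 : p ≠ 0 := minpoly.ne_zero hTint
  have hevalT : Polynomial.aeval T p = 0 := minpoly.aeval K T
  refine ⟨p, ?_, ?_⟩
  · have := key p
    rw [hevalT] at this
    simp only [LinearMap.zero_apply] at this
    exact (Submodule.Quotient.mk_eq_zero J).mp this.symm
  · intro h
    apply hp0
    apply hinj
    rw [h, map_zero]
end

section
/- Suppose J·s ⊆ J (i.e. a·s ∈ J for every a ∈ J) and d := dim_K Module.End A (A⧸J) is finite. Then there exists a monic polynomial p ∈ K[X] with deg p ≤ d such that p(s) ∈ J. -/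
set_option maxHeartbeats 1000000

/-- If `J·s ⊆ J` and `d = dim_K End_A(A⧸J)` is finite, then there is a
monic polynomial `p ∈ K[X]` of degree at most `d` with `p(s) ∈ J`. -/
theorem stmt1 (K : Type*) [Field K] [CharZero K]
    (A : Type*) [Ring A] [Algebra K A]
    (J : Submodule A A) (s : A)
    (hJs : ∀ a ∈ J, a * s ∈ J)
    (hfin : FiniteDimensional K (Module.End A (A ⧸ J))) :
    ∃ p : Polynomial K, p.Monic ∧
      p.natDegree ≤ Module.finrank K (Module.End A (A ⧸ J)) ∧
      Polynomial.aeval s p ∈ J := by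
  -- right multiplication by s descends to an A-module endomorphism of A⧸J
  obtain ⟨φ, happ⟩ : ∃ φ : Module.End A (A ⧸ J),
      ∀ a : A, φ (Submodule.Quotient.mk a) = Submodule.Quotient.mk (a * s) := by
    refine ⟨J.liftQ
      { toFun := fun a => Submodule.Quotient.mk (a * s)
        map_add' := by intro a b; simp [add_mul]
        map_smul' := by
          intro a b
          simp only [smul_eq_mul, RingHom.id_apply, mul_assoc,
            ← Submodule.Quotient.mk_smul] } ?_, fun a => rfl⟩
    intro a ha
    exact LinearMap.mem_ker.2 ((Submodule.Quotient.mk_eq_zero J).2 (hJs a ha))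
  have hpow : ∀ n : ℕ, (φ ^ n) (Submodule.Quotient.mk 1) = Submodule.Quotient.mk (s ^ n) := by
    intro n
    induction n with
    | zero => simp
    | succ n ih =>
      rw [pow_succ', Module.End.mul_apply, ih, happ, ← pow_succ]
  have key : ∀ p : Polynomial K,
      (Polynomial.aeval φ p) (Submodule.Quotient.mk 1)
        = Submodule.Quotient.mk (Polynomial.aeval s p) := by
    intro p
    induction p using Polynomial.induction_on' with
    | add p q hp hq => simp [hp, hq]
    | monomial n c =>
      rw [Polynomial.aeval_monomial, Polynomial.aeval_monomial,
        Algebra.algebraMap_eq_smul_one, smul_mul_assoc, one_mul,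
        LinearMap.smul_apply, hpow, ← Submodule.Quotient.mk_smul,
        Algebra.smul_def]
  -- use the characteristic polynomial of left multiplication by φ on End A (A⧸J)
  obtain ⟨p, hmon, hdeg, hp0⟩ : ∃ p : Polynomial K, p.Monic ∧
      p.natDegree = Module.finrank K (Module.End A (A ⧸ J)) ∧
      Polynomial.aeval φ p = 0 := by
    set L : Module.End A (A ⧸ J) →ₗ[K] Module.End A (A ⧸ J) :=
      (Algebra.lmul K (Module.End A (A ⧸ J))) φ with hL
    refine ⟨L.charpoly, L.charpoly_monic, L.charpoly_natDegree, ?_⟩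
    have hch : Polynomial.aeval L L.charpoly = 0 := L.aeval_self_charpoly
    rw [hL, Polynomial.aeval_algHom_apply] at hch
    have := DFunLike.congr_fun hch (1 : Module.End A (A ⧸ J))
    rw [hL]; simpa using this
  refine ⟨p, hmon, le_of_eq hdeg, ?_⟩
  have h0 : (Polynomial.aeval φ p) (Submodule.Quotient.mk 1) = 0 := by
    rw [hp0]; rfl
  rw [key] at h0
  exact (Submodule.Quotient.mk_eq_zero J).1 h0
end

section
/- Suppose J·s ⊆ J (i.e. a·s ∈ J for every a ∈ J) and Module.End A (A⧸J) is finite-dimensional over K. Then there exists a monic polynomial b ∈ K[X] such that for every polynomial p ∈ K[X], one has p(s) ∈ J if and only if b divides p. (In other words, {p ∈ K[X] : p(s) ∈ J} is the nonzero principal ideal of K[X] generated by the monic polynomial b; this is the polynomial returned by the PrincipalIntersect algorithm.) -/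
open Polynomial

/-- If `J·s ⊆ J` and `End_A(A⧸J)` is finite-dimensional over `K`, then
`{p ∈ K[X] | p(s) ∈ J}` is the nonzero principal ideal generated by a monic `b`. -/
theorem stmt3 (K : Type*) [Field K] [CharZero K]
    (A : Type*) [Ring A] [Algebra K A]
    (J : Submodule A A) (s : A)
    (hJs : ∀ a ∈ J, a * s ∈ J)
    (hfin : FiniteDimensional K (Module.End A (A ⧸ J))) :
    ∃ b : Polynomial K, b.Monic ∧
      ∀ p : Polynomial K, Polynomial.aeval s p ∈ J ↔ b ∣ p := by
  classical
  -- right multiplication by s on A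
  let g : A →ₗ[A] A := LinearMap.toSpanSingleton A A s
  have hle : J ≤ J.comap g := by
    intro a ha
    simpa [g, LinearMap.toSpanSingleton_apply, smul_eq_mul] using hJs a ha
  -- induced endomorphism of A⧸J
  let f : Module.End A (A ⧸ J) := J.mapQ J g hle
  have hf : ∀ x : A, f (Submodule.Quotient.mk x) = Submodule.Quotient.mk (x * s) := by
    intro x; simp [f, g, Submodule.mapQ_apply, LinearMap.toSpanSingleton_apply, smul_eq_mul]
  have key : ∀ p : Polynomial K,
      (aeval f p) (Submodule.Quotient.mk 1) = Submodule.Quotient.mk (aeval s p) := by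
    intro p
    induction p using Polynomial.induction_on' with
    | add p q hp hq => simp [map_add, hp, hq]
    | monomial n c =>
        have hpow : ∀ n : ℕ, ∀ x : A, (f ^ n) (Submodule.Quotient.mk x) =
            Submodule.Quotient.mk (x * s ^ n) := by
          intro n
          induction n with
          | zero => intro x; simp
          | succ n ih =>
              intro x
              rw [pow_succ', Module.End.mul_apply, ih, hf, pow_succ, mul_assoc]
        rw [aeval_monomial, aeval_monomial]
        have : (algebraMap K (Module.End A (A ⧸ J)) c * f ^ n) (Submodule.Quotient.mk 1)
            = algebraMap K (Module.End A (A ⧸ J)) c ((f ^ n) (Submodule.Quotient.mk 1)) :=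
          rfl
        rw [this, hpow n 1, one_mul]
        have halg : ∀ v : A ⧸ J, algebraMap K (Module.End A (A ⧸ J)) c v = c • v := by
          intro v; rfl
        rw [halg]
        rw [← Submodule.Quotient.mk_smul, Algebra.smul_def]
  -- the ideal of polynomials vanishing on s mod J
  let I : Ideal (Polynomial K) :=
    { carrier := {p | aeval s p ∈ J}
      add_mem' := fun hp hq => by
        simp only [Set.mem_setOf_eq, map_add] at *
        exact J.add_mem hp hq
      zero_mem' := by simp
      smul_mem' := fun r p hp => by
        simp only [Set.mem_setOf_eq, smul_eq_mul, map_mul] at *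
        simpa [smul_eq_mul] using J.smul_mem (aeval s r) hp }
  have hmemI : ∀ p : Polynomial K, p ∈ I ↔ aeval s p ∈ J := fun p => Iff.rfl
  -- I is nonzero: f is integral over K
  have : Algebra.IsIntegral K (Module.End A (A ⧸ J)) := Algebra.IsIntegral.of_finite K _
  obtain ⟨m, hm, hm0⟩ := this.isIntegral f
  have hmI : m ∈ I := by
    rw [hmemI, ← Submodule.Quotient.mk_eq_zero, ← key m, aeval_def, hm0]
    rfl
  -- generator
  let g0 := Submodule.IsPrincipal.generator I
  have hg0 : I = Ideal.span {g0} := (Ideal.span_singleton_generator I).symm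
  have hg0ne : g0 ≠ 0 := by
    intro h
    rw [h, Ideal.span_singleton_eq_bot.mpr rfl] at hg0
    rw [hg0] at hmI
    exact hm.ne_zero (by simpa using hmI)
  refine ⟨g0 * C g0.leadingCoeff⁻¹, monic_mul_leadingCoeff_inv hg0ne, ?_⟩
  intro p
  rw [← hmemI, hg0, Ideal.mem_span_singleton]
  have hu : IsUnit (C g0.leadingCoeff⁻¹) :=
    Polynomial.isUnit_C.mpr (isUnit_iff_ne_zero.mpr (inv_ne_zero (leadingCoeff_ne_zero.mpr hg0ne)))
  exact (hu.mul_right_dvd).symm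
end

section
/- Let w : Fin n → K, m ∈ K, and let P = Σ_{(α,β)∈F} c_{α,β} · x^α∘∂^β be a finite K-linear combination of the operators x^α∂^β such that Σᵢ wᵢ·((βᵢ : K) − (αᵢ : K)) = m for every pair (α,β) with c_{α,β} ≠ 0 (P is (−w,w)-homogeneous of degree m). Set E := Σᵢ wᵢ • (xᵢ∘∂ᵢ). Then P∘E = E∘P + m•P as K-linear endomorphisms of K[x₁,…,xₙ]; in particular right composition with the Euler operator E maps P to (E + m)∘P. -/
open MvPolynomial

/-- Multiplication by the monomial `x^α = ∏ᵢ xᵢ^{αᵢ}` as a K-linear endomorphism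
of `K[x₁,…,xₙ]`. -/
noncomputable def xPowMul (K : Type*) [Field K] (n : ℕ) (α : Fin n → ℕ) :
    Module.End K (MvPolynomial (Fin n) K) :=
  LinearMap.mulLeft K (∏ i, X i ^ α i)

/-- The composition `∂^β = ∂₁^{β₁} ∘ ⋯ ∘ ∂ₙ^{βₙ}` of partial derivatives as a
K-linear endomorphism of `K[x₁,…,xₙ]` (the `∂ᵢ` commute pairwise). -/
noncomputable def pderivPow (K : Type*) [Field K] (n : ℕ) (β : Fin n → ℕ) :
    Module.End K (MvPolynomial (Fin n) K) :=
  (List.ofFn fun i : Fin n =>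
    ((pderiv i).toLinearMap : Module.End K (MvPolynomial (Fin n) K)) ^ β i).prod

lemma aux_pderiv_pow_monomial (K : Type*) [Field K] {n : ℕ} (i : Fin n) (k : ℕ)
    (μ : Fin n →₀ ℕ) (b : K) :
    (((pderiv i).toLinearMap : Module.End K (MvPolynomial (Fin n) K)) ^ k) (monomial μ b)
      = monomial (μ - Finsupp.single i k) (((μ i).descFactorial k : K) * b) := by
  induction k with
  | zero => simp
  | succ k ih =>
    rw [pow_succ', Module.End.mul_apply, ih]
    simp only [Derivation.coeFn_coe, pderiv_monomial]
    rw [tsub_tsub, ← Finsupp.single_add]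
    congr 1
    rw [Finsupp.tsub_apply, Finsupp.single_eq_same, Nat.descFactorial_succ]
    push_cast
    ring

lemma aux_list_sum_apply {n : ℕ} (β : Fin n → ℕ) (l : List (Fin n)) (i : Fin n)
    (hi : i ∉ l) : ((l.map fun j => Finsupp.single j (β j)).sum) i = 0 := by
  induction l with
  | nil => simp
  | cons j l ih =>
    simp only [List.mem_cons, not_or] at hi
    simp [Finsupp.single_apply, Ne.symm hi.1, ih hi.2]

lemma aux_pderiv_list_monomial (K : Type*) [Field K] {n : ℕ} (β : Fin n → ℕ)
    (l : List (Fin n)) (hl : l.Nodup) (μ : Fin n →₀ ℕ) (b : K) :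
    ((l.map fun i => ((pderiv i).toLinearMap : Module.End K (MvPolynomial (Fin n) K)) ^ β i).prod)
        (monomial μ b)
      = monomial (μ - (l.map fun i => Finsupp.single i (β i)).sum)
          ((l.map fun i => ((μ i).descFactorial (β i) : K)).prod * b) := by
  induction l with
  | nil => simp
  | cons i l ih =>
    obtain ⟨hi, hl⟩ := List.nodup_cons.mp hl
    rw [List.map_cons, List.prod_cons, Module.End.mul_apply, ih hl, aux_pderiv_pow_monomial]
    rw [Finsupp.tsub_apply, aux_list_sum_apply β l i hi, Nat.sub_zero]
    rw [List.map_cons, List.sum_cons, List.map_cons, List.prod_cons]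
    rw [tsub_tsub, add_comm]
    congr 1
    ring

lemma aux_sum_single {n : ℕ} (β : Fin n → ℕ) :
    ((List.finRange n).map fun i => Finsupp.single i (β i)).sum
      = Finsupp.equivFunOnFinite.symm β := by
  rw [← Fin.sum_univ_def]
  ext j
  simp [Finsupp.single_apply, Finset.sum_apply']

lemma aux_pderivPow_monomial (K : Type*) [Field K] {n : ℕ} (β : Fin n → ℕ)
    (μ : Fin n →₀ ℕ) (b : K) :
    pderivPow K n β (monomial μ b)
      = monomial (μ - Finsupp.equivFunOnFinite.symm β)
          ((∏ i, ((μ i).descFactorial (β i) : K)) * b) := by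
  rw [pderivPow, List.ofFn_eq_map,
    aux_pderiv_list_monomial K β _ (List.nodup_finRange n), aux_sum_single,
    ← Fin.prod_univ_def]

lemma aux_prod_X_pow (K : Type*) [Field K] {n : ℕ} (α : Fin n → ℕ) :
    (∏ i, X i ^ α i : MvPolynomial (Fin n) K)
      = monomial (Finsupp.equivFunOnFinite.symm α) 1 := by
  rw [← prod_X_pow_eq_monomial]
  refine (Finset.prod_subset (Finset.subset_univ _) fun x _ hx => ?_).symm
  simp only [Finsupp.mem_support_iff, not_not] at hx
  simp_all [hx]

lemma aux_xPowMul_monomial (K : Type*) [Field K] {n : ℕ} (α : Fin n → ℕ)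
    (ν : Fin n →₀ ℕ) (b : K) :
    xPowMul K n α (monomial ν b)
      = monomial (ν + Finsupp.equivFunOnFinite.symm α) b := by
  rw [xPowMul, LinearMap.mulLeft_apply, aux_prod_X_pow, monomial_mul, one_mul, add_comm]

lemma aux_euler_monomial (K : Type*) [Field K] {n : ℕ} (w : Fin n → K)
    (μ : Fin n →₀ ℕ) (b : K) :
    ((∑ i, w i • (LinearMap.mulLeft K (X i) * (pderiv i).toLinearMap) :
        Module.End K (MvPolynomial (Fin n) K)))
        (monomial μ b)
      = (∑ i, w i * (μ i : K)) • monomial μ b := by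
  rw [LinearMap.sum_apply, Finset.sum_smul]
  refine Finset.sum_congr rfl fun i _ => ?_
  rw [LinearMap.smul_apply, Module.End.mul_apply]
  simp only [Derivation.coeFn_coe, pderiv_monomial, LinearMap.mulLeft_apply]
  by_cases h : μ i = 0
  · simp [h]
  · rw [X, monomial_mul, one_mul]
    have hexp : Finsupp.single i 1 + (μ - Finsupp.single i 1) = μ := by
      ext j
      rcases eq_or_ne j i with rfl | hj
      · simp only [Finsupp.add_apply, Finsupp.tsub_apply, Finsupp.single_eq_same]
        omega
      · simp [Finsupp.single_apply, Ne.symm hj]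
    rw [hexp, smul_monomial, smul_monomial]
    congr 1
    simp only [smul_eq_mul]
    ring


/-- if `P = Σ_{(α,β)∈F} c_{α,β} x^α∂^β` is `(−w,w)`-homogeneous of degree
`m`, i.e. `Σᵢ wᵢ(βᵢ − αᵢ) = m` whenever `c_{α,β} ≠ 0`, and `E = Σᵢ wᵢ xᵢ∂ᵢ` is the
Euler operator, then `P∘E = E∘P + m•P`. -/
theorem stmt8 (K : Type*) [Field K] [CharZero K] (n : ℕ)
    (w : Fin n → K) (m : K)
    (F : Finset ((Fin n → ℕ) × (Fin n → ℕ)))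
    (c : (Fin n → ℕ) × (Fin n → ℕ) → K)
    (hdeg : ∀ q ∈ F, c q ≠ 0 → ∑ i, w i * ((q.2 i : K) - (q.1 i : K)) = m)
    (P : Module.End K (MvPolynomial (Fin n) K))
    (hP : P = ∑ q ∈ F, c q • (xPowMul K n q.1 * pderivPow K n q.2))
    (E : Module.End K (MvPolynomial (Fin n) K))
    (hE : E = ∑ i, w i • (LinearMap.mulLeft K (X i) * (pderiv i).toLinearMap)) :
    P * E = E * P + m • P := by
  have hPapp : ∀ (s : Fin n →₀ ℕ) (a : K), P (monomial s a) =
      ∑ q ∈ F, c q • monomial (s - Finsupp.equivFunOnFinite.symm q.2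
          + Finsupp.equivFunOnFinite.symm q.1)
        ((∏ i, ((s i).descFactorial (q.2 i) : K)) * a) := by
    intro s a
    rw [hP, LinearMap.sum_apply]
    refine Finset.sum_congr rfl fun q _ => ?_
    rw [LinearMap.smul_apply, Module.End.mul_apply, aux_pderivPow_monomial,
      aux_xPowMul_monomial]
  have hEapp : ∀ (ν : Fin n →₀ ℕ) (b : K),
      E (monomial ν b) = (∑ i, w i * (ν i : K)) • monomial ν b := by
    intro ν b; rw [hE]; exact aux_euler_monomial K w ν b
  apply MvPolynomial.linearMap_ext; intro s
  apply LinearMap.ext; intro a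
  simp only [LinearMap.comp_apply, Module.End.mul_apply, LinearMap.add_apply,
    LinearMap.smul_apply]
  rw [hEapp, map_smul, hPapp, map_sum, Finset.smul_sum, Finset.smul_sum]
  rw [← Finset.sum_add_distrib]
  refine Finset.sum_congr rfl fun q hq => ?_
  by_cases hc : c q = 0
  · simp [hc]
  rw [map_smul, hEapp]
  set ν := s - Finsupp.equivFunOnFinite.symm q.2 + Finsupp.equivFunOnFinite.symm q.1 with hν
  by_cases hD : (∏ i, ((s i).descFactorial (q.2 i) : K)) = 0
  · simp [hD]
  have hβ : ∀ i, q.2 i ≤ s i := by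
    intro i
    by_contra hlt
    exact hD (Finset.prod_eq_zero (Finset.mem_univ i)
      (by rw [Nat.descFactorial_eq_zero_iff_lt.mpr (lt_of_not_ge hlt), Nat.cast_zero]))
  have hν_apply : ∀ i, (ν i : K) = (s i : K) - q.2 i + q.1 i := by
    intro i
    simp only [hν, Finsupp.add_apply, Finsupp.tsub_apply,
      Finsupp.coe_equivFunOnFinite_symm]
    push_cast [Nat.cast_sub (hβ i)]
    ring
  have hlam : (∑ i, w i * (s i : K)) = (∑ i, w i * (ν i : K)) + m := by
    rw [← hdeg q hq hc, ← Finset.sum_add_distrib]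
    refine Finset.sum_congr rfl fun i _ => ?_
    rw [hν_apply i]; ring
  rw [smul_smul, smul_smul, smul_smul, ← add_smul]
  congr 1
  rw [hlam]; ring
end

section
/- For all indices k ∈ {1,…,p} and i ∈ {1,…,n}, the operators t_k − f_k and gᵢ commute: [t_k − f_k, gᵢ] = 0 as K-linear endomorphisms of K[x₁,…,xₙ,t₁,…,t_p]. -/
open MvPolynomial

variable (K : Type*) [Field K] (n p : ℕ)

/-- The image of `fⱼ ∈ K[x₁,…,xₙ]` in `K[x₁,…,xₙ,t₁,…,t_p]` under the natural
inclusion. -/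
noncomputable def liftX (f : MvPolynomial (Fin n) K) :
    MvPolynomial (Fin n ⊕ Fin p) K :=
  rename Sum.inl f

/-- The operator `gᵢ = ∂_{xᵢ} + Σⱼ M_{∂fⱼ/∂xᵢ} ∘ ∂_{tⱼ}` on `K[x₁,…,xₙ,t₁,…,t_p]`. -/
noncomputable def gOp (f : Fin p → MvPolynomial (Fin n) K) (i : Fin n) :
    Module.End K (MvPolynomial (Fin n ⊕ Fin p) K) :=
  (pderiv (Sum.inl i)).toLinearMap +
    ∑ j, LinearMap.mulLeft K (pderiv (Sum.inl i) (liftX K n p (f j))) *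
      (pderiv (Sum.inr j)).toLinearMap

/-- The operator `sⱼ = −M_{tⱼ} ∘ ∂_{tⱼ} − id` on `K[x₁,…,xₙ,t₁,…,t_p]`
(Mellin substitution `sⱼ ↦ −tⱼ∂_{tⱼ} − 1`). -/
noncomputable def sOp (j : Fin p) :
    Module.End K (MvPolynomial (Fin n ⊕ Fin p) K) :=
  -(LinearMap.mulLeft K (X (Sum.inr j)) * (pderiv (Sum.inr j)).toLinearMap) - 1

lemma pderiv_inr_rename_inl {K : Type*} [CommSemiring K] {n p : ℕ} (j : Fin p)
    (f : MvPolynomial (Fin n) K) :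
    pderiv (Sum.inr j) (rename (Sum.inl : Fin n → Fin n ⊕ Fin p) f) = 0 := by
  induction f using MvPolynomial.induction_on with
  | C a => simp
  | add p q hp hq => simp [hp, hq]
  | mul_X p a h => simp [pderiv_mul, h, pderiv_X_of_ne]

/-- the multiplication operator `t_k − f_k` commutes with `gᵢ`:
`[t_k − f_k, gᵢ] = 0`. -/
theorem stmt10 (K : Type*) [Field K] [CharZero K] (n p : ℕ)
    (f : Fin p → MvPolynomial (Fin n) K) (k : Fin p) (i : Fin n) :
    LinearMap.mulLeft K (X (Sum.inr k) - liftX K n p (f k)) * gOp K n p f i =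
      gOp K n p f i * LinearMap.mulLeft K (X (Sum.inr k) - liftX K n p (f k)) := by
  apply LinearMap.ext; intro q
  simp only [gOp, liftX, Module.End.mul_apply, LinearMap.add_apply, LinearMap.sum_apply,
    LinearMap.mulLeft_apply, Derivation.coeFn_coe, pderiv_mul, map_sub, pderiv_X,
    pderiv_inr_rename_inl, mul_add, mul_sub, sub_mul, add_mul, Finset.sum_add_distrib,
    Pi.single_apply]
  simp only [reduceCtorEq, if_false, Sum.inr.injEq, mul_ite, mul_one, mul_zero, zero_mul,
    Finset.sum_ite_eq, Finset.mem_univ, if_true, Finset.mul_sum]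
  simp only [ite_mul, one_mul, zero_mul, Finset.sum_ite_eq, Finset.mem_univ, if_true,
    Finset.sum_const_zero, neg_zero]
  simp only [mul_ite, mul_zero, Finset.sum_ite_eq, Finset.mem_univ, if_true]
  simp only [mul_comm, mul_left_comm, mul_assoc]
  abel
end

section
/- For all indices j ∈ {1,…,p} and i ∈ {1,…,n}: [sⱼ + M_{fⱼ}∘∂_{tⱼ}, gᵢ] = 0, i.e. the operator sⱼ + M_{fⱼ}∘∂_{tⱼ} commutes with gᵢ = ∂_{xᵢ} + Σ_k M_{∂f_k/∂xᵢ}∘∂_{t_k} as K-linear endomorphisms of K[x₁,…,xₙ,t₁,…,t_p]. -/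
open MvPolynomial

variable (K : Type*) [Field K] (n p : ℕ)

lemma pderiv_one' {σ R : Type*} [CommSemiring R] (a : σ) :
    pderiv a (1 : MvPolynomial σ R) = 0 := by
  simpa using (pderiv_C (σ := σ) (a := (1:R)) (i := a))

lemma pderiv_pderiv_comm {σ R : Type*} [CommSemiring R] (a b : σ) (q : MvPolynomial σ R) :
    pderiv a (pderiv b q) = pderiv b (pderiv a q) := by
  classical
  induction q using MvPolynomial.induction_on with
  | C c => simp
  | add p q hp hq => simp [hp, hq]
  | mul_X q s hq =>
    simp only [pderiv_mul, pderiv_X, Pi.single_apply, apply_ite (pderiv a),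
      apply_ite (pderiv b), pderiv_one', map_add, map_zero, hq, mul_ite, ite_mul,
      mul_zero, zero_mul, mul_one, one_mul]
    split_ifs <;> ring

lemma pderiv_liftX' {K : Type*} [Field K] {n p : ℕ} (j : Fin p) (g : MvPolynomial (Fin n) K) :
    pderiv (Sum.inr j) (rename (Sum.inl : Fin n → Fin n ⊕ Fin p) g) = 0 := by
  classical
  induction g using MvPolynomial.induction_on with
  | C c => simp
  | add p q hp hq => simp [hp, hq]
  | mul_X q s hq => simp [pderiv_mul, hq, pderiv_X_of_ne]

lemma pderiv_pderiv_liftX {K : Type*} [Field K] {n p : ℕ} (k : Fin p) (i : Fin n)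
    (g : MvPolynomial (Fin n) K) :
    pderiv (Sum.inr k) (pderiv (Sum.inl i)
      (rename (Sum.inl : Fin n → Fin n ⊕ Fin p) g)) = 0 := by
  rw [pderiv_pderiv_comm, pderiv_liftX', map_zero]

/-- `[sⱼ + M_{fⱼ}∘∂_{tⱼ}, gᵢ] = 0`. -/
theorem stmt13 (K : Type*) [Field K] [CharZero K] (n p : ℕ)
    (f : Fin p → MvPolynomial (Fin n) K) (j : Fin p) (i : Fin n) :
    (sOp K n p j + LinearMap.mulLeft K (liftX K n p (f j)) *
        (pderiv (Sum.inr j)).toLinearMap) * gOp K n p f i =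
      gOp K n p f i *
        (sOp K n p j + LinearMap.mulLeft K (liftX K n p (f j)) *
          (pderiv (Sum.inr j)).toLinearMap) := by
  classical
  apply LinearMap.ext
  intro q
  simp only [sOp, gOp, liftX, Module.End.mul_apply, LinearMap.add_apply, LinearMap.sub_apply,
    LinearMap.neg_apply, Module.End.one_apply, LinearMap.sum_apply, LinearMap.mulLeft_apply,
    Derivation.coeFn_coe, map_add, map_sum, map_neg, map_sub, pderiv_mul, pderiv_liftX',
    pderiv_pderiv_liftX, pderiv_X, Pi.single_apply, zero_mul, mul_zero, add_zero, zero_add,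
    mul_ite, ite_mul, mul_one, one_mul, Sum.inr.injEq, pderiv_pderiv_comm]
  simp only [map_zero, zero_mul, mul_zero, add_zero, zero_add, reduceCtorEq, if_false,
    Finset.mem_univ, Finset.sum_ite_eq, if_true, Finset.sum_add_distrib, Finset.sum_sub_distrib,
    neg_add, neg_sub, neg_neg, ← Finset.sum_neg_distrib]
  simp only [mul_comm, mul_assoc, mul_left_comm]
  ring
end
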